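/- For all positive integers n ≤ m there exists a surjective weak p-morphism from P(2^m) onto P(2^n). -/
import Mathlib


/-- The set of maximal elements of the subposet `S`. -/
def maxSet {X : Type*} [PartialOrder X] (S : Set X) : Set X :=
  {x | x ∈ S ∧ ∀ y ∈ S, x ≤ y → y = x}

/-- A weak p-morphism: an order preserving map such that for all `x` and all maximal `y`
above `p x` there is a maximal element `z` of `↑x` with `p z = y`. -/
def IsWeakPMorphism {X Y : Type*} [PartialOrder X] [PartialOrder Y] (p : X → Y) : Prop :=
  Monotone p ∧
    ∀ x : X, ∀ y ∈ maxSet (Set.univ : Set Y), p x ≤ y →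
      ∃ z ∈ maxSet (Set.Ici x), p z = y

/-- The poset `P(X)`: pairs `⟨x, C⟩` with `C` a nonempty subset of `↑x`, ordered by
`⟨x, C⟩ ≤ ⟨y, D⟩ iff x ≤ y and D ⊆ C`. -/
structure PP (X : Type*) [PartialOrder X] where
  pt : X
  cl : Set X
  cl_nonempty : cl.Nonempty
  cl_subset : cl ⊆ Set.Ici pt

instance PP.instPartialOrder {X : Type*} [PartialOrder X] : PartialOrder (PP X) where
  le a b := a.pt ≤ b.pt ∧ b.cl ⊆ a.cl
  le_refl a := ⟨le_rfl, subset_rfl⟩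
  le_trans a b c hab hbc := ⟨hab.1.trans hbc.1, hbc.2.trans hab.2⟩
  le_antisymm a b hab hba := by
    obtain ⟨pa, ca, h1, h2⟩ := a
    obtain ⟨pb, cb, h3, h4⟩ := b
    obtain ⟨hle, hsub⟩ := hab
    obtain ⟨hge, hsup⟩ := hba
    have e1 : pa = pb := le_antisymm hle hge
    have e2 : ca = cb := Set.Subset.antisymm hsup hsub
    subst e1; subst e2; rfl

lemma PP.le_def {X : Type*} [PartialOrder X] (a b : PP X) :
    a ≤ b ↔ a.pt ≤ b.pt ∧ b.cl ⊆ a.cl := Iff.rfl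

lemma PP.ext' {X : Type*} [PartialOrder X] {a b : PP X}
    (h1 : a.pt = b.pt) (h2 : a.cl = b.cl) : a = b := by
  cases a; cases b; simp_all

/-- A "point" element ⟨d, {d}⟩. -/
def PP.point {X : Type*} [PartialOrder X] (d : X) : PP X :=
  ⟨d, {d}, ⟨d, rfl⟩, by simp⟩

/-- For all positive integers `n ≤ m` there is a surjective weak p-morphism from `P(2^m)`
onto `P(2^n)`. -/
theorem pp_surjection_of_le (n m : ℕ) (hn : 0 < n) (hnm : n ≤ m) :
    ∃ p : PP (Set (Fin m)) → PP (Set (Fin n)),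
      Function.Surjective p ∧ IsWeakPMorphism p := by
  set f : Fin n → Fin m := Fin.castLE hnm with hfdef
  have hf : Function.Injective f := Fin.castLE_injective hnm
  set π : Set (Fin m) → Set (Fin n) := fun s => f ⁻¹' s with hπ
  have πmono : Monotone π := fun s t hst => Set.preimage_mono hst
  set e : Set (Fin n) → Set (Fin m) := fun s => f '' s with he
  have hπe : ∀ s, π (e s) = s := fun s => Set.preimage_image_eq s hf
  refine ⟨fun a => ⟨π a.pt, π '' a.cl, a.cl_nonempty.image _,
      fun s ⟨c, hc, hcs⟩ => hcs ▸ πmono (a.cl_subset hc)⟩, ?_, ?_, ?_⟩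
  · -- surjective
    intro b
    refine ⟨⟨e b.pt, e '' b.cl, b.cl_nonempty.image _,
      fun s ⟨c, hc, hcs⟩ => hcs ▸ Set.image_mono (b.cl_subset hc)⟩, ?_⟩
    apply PP.ext'
    · exact hπe _
    · simp only [← Set.image_comp]
      have : π ∘ e = id := funext hπe
      rw [Set.image_comp, Set.image_image]
      simp [hπe]
  · -- monotone
    intro a b hab
    exact ⟨πmono hab.1, Set.image_mono hab.2⟩
  · -- p-morphism condition
    intro x y hy hle
    obtain ⟨d, hd⟩ := y.cl_nonempty
    have hyd : y = PP.point d := by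
      have h1 : y ≤ PP.point d := ⟨y.cl_subset hd, by simp [PP.point, hd]⟩
      exact (hy.2 _ (Set.mem_univ _) h1).symm
    have hdmem : d ∈ π '' x.cl := hle.2 (by rw [hyd]; exact rfl)
    obtain ⟨c, hc, hcd⟩ := hdmem
    refine ⟨⟨c, {c}, ⟨c, rfl⟩, by simp⟩, ⟨⟨x.cl_subset hc, by simpa using hc⟩, ?_⟩, ?_⟩
    · rintro z ⟨hz1, hz2⟩ ⟨hz3, hz4⟩
      have hzc : z.cl = {c} := Set.eq_singleton_iff_nonempty_unique_mem.mpr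
        ⟨z.cl_nonempty, fun w hw => hz4 hw⟩
      have : z.pt = c := le_antisymm (z.cl_subset (by rw [hzc]; rfl)) hz3
      exact PP.ext' this hzc
    · rw [hyd]
      apply PP.ext'
      · exact hcd
      · simp [PP.point, ← hcd]
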